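/- If C is a linear code over GF(q) whose dual code C⊥ has exactly s' distinct nonzero weights, then the covering radius of C satisfies ρ(C) ≤ s' (Delsarte's external distance bound). -/

import Mathlib

/-- The dual code of a linear code `C ⊆ F^n` w.r.t. the standard bilinear form. -/
def dualCode {F : Type*} [Field F] {n : ℕ} (C : Submodule F (Fin n → F)) :
    Submodule F (Fin n → F) where
  carrier := {v | ∀ c ∈ C, ∑ i, v i * c i = 0}
  zero_mem' := by intro c hc; simp
  add_mem' := by
    intro a b ha hb c hc
    simp [Pi.add_apply, add_mul, Finset.sum_add_distrib, ha c hc, hb c hc]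
  smul_mem' := by
    intro r a ha c hc
    simp [Pi.smul_apply, smul_eq_mul, mul_assoc, ← Finset.mul_sum, ha c hc]

/-- The covering radius of a linear code: the largest distance from a vector to the code. -/
noncomputable def coveringRadius {F : Type*} [Field F] [Fintype F] [DecidableEq F] {n : ℕ}
    (C : Submodule F (Fin n → F)) : ℕ :=
  sSup {r | ∃ v : Fin n → F, r = sInf {d | ∃ c ∈ C, hammingDist v c = d}}

open Finset

private lemma addChar_map_finsum {F : Type*} [Field F] (ψ : AddChar F ℂ) {ι : Type*}
    (s : Finset ι) (f : ι → F) : ψ (∑ i ∈ s, f i) = ∏ i ∈ s, ψ (f i) := by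
  classical
  induction s using Finset.induction with
  | empty => simp
  | insert _ _ h ih =>
      rw [Finset.sum_insert h, Finset.prod_insert h, AddChar.map_add_eq_mul, ih]

set_option maxHeartbeats 1000000 in
private lemma delsarte_key {F : Type*} [Field F] [Fintype F] [DecidableEq F] {n : ℕ}
    (C : Submodule F (Fin n → F)) (s' : ℕ)
    (hs : {w : ℕ | w ≠ 0 ∧ ∃ c ∈ dualCode C, hammingNorm c = w}.ncard = s')
    (v : Fin n → F) : ∃ c ∈ C, hammingDist v c ≤ s' := by
  classical
  haveI : Fintype C := Fintype.ofFinite _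
  -- the finite set of nonzero dual weights
  have hWfin : {w : ℕ | w ≠ 0 ∧ ∃ c ∈ dualCode C, hammingNorm c = w}.Finite :=
    (Set.finite_Icc 0 n).subset (by
      rintro w ⟨hw0, c, hc, rfl⟩
      exact Set.mem_Icc.2 ⟨Nat.zero_le _, (Finset.card_filter_le _ _).trans (by simp)⟩)
  set W' : Finset ℕ := hWfin.toFinset with hW'def
  have hW'card : W'.card = s' := by
    rw [← hs, Set.ncard_eq_toFinset_card _ hWfin]
  have hW'mem : ∀ w ∈ W', w ≠ 0 ∧ ∃ c ∈ dualCode C, hammingNorm c = w := by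
    intro w hw; exact (Set.Finite.mem_toFinset hWfin).1 hw
  have hW'mem' : ∀ u, u ∈ dualCode C → u ≠ 0 → hammingNorm u ∈ W' := by
    intro u hu hu0
    refine (Set.Finite.mem_toFinset hWfin).2 ⟨?_, u, hu, rfl⟩
    simpa [hammingNorm_eq_zero] using hu0
  -- a nontrivial additive character of F with values in ℂ
  obtain ⟨ψ, hψ1⟩ := (AddChar.exists_apply_ne_zero (a := (1 : F))).2 one_ne_zero
  have hψ0 : ψ ≠ 0 := AddChar.ne_zero_iff.2 ⟨1, hψ1⟩
  have hsumF : ∑ a : F, ψ a = 0 := AddChar.sum_eq_zero_iff_ne_zero.2 hψ0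
  have hsum_mul : ∀ d : F, d ≠ 0 → ∑ a : F, ψ (a * d) = 0 := by
    intro d hd
    rw [← hsumF]
    exact Fintype.sum_equiv (Equiv.mulRight₀ d hd) _ _ (fun a => rfl)
  -- the standard bilinear pairing
  set ip : (Fin n → F) → (Fin n → F) → F := fun u y => ∑ i, u i * y i with hip
  -- character sums over the code
  have hdualsum : ∀ u : Fin n → F, u ∉ dualCode C → ∑ c : C, ψ (ip u c) = 0 := by
    intro u hu
    have hex : ∃ c0 ∈ C, ip u c0 ≠ 0 := by
      by_contra h
      push_neg at h
      exact hu h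
    obtain ⟨c0, hc0, ht0⟩ := hex
    obtain ⟨b, hb⟩ := AddChar.ne_zero_iff.1 hψ0
    set a : F := b * (ip u c0)⁻¹ with ha
    have hat0 : a * ip u c0 = b := by
      rw [ha]; field_simp
    have hiplin : ∀ x : Fin n → F, ip u (x + a • c0) = ip u x + a * ip u c0 := by
      intro x
      simp only [hip, Pi.add_apply, Pi.smul_apply, smul_eq_mul, mul_add,
        Finset.sum_add_distrib, Finset.mul_sum]
      congr 1
      exact Finset.sum_congr rfl fun i _ => by ring
    have key : (∑ c : C, ψ (ip u ↑c)) * ψ b = ∑ c : C, ψ (ip u ↑c) := by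
      calc (∑ c : C, ψ (ip u ↑c)) * ψ b
          = ∑ c : C, ψ (ip u ↑c + a * ip u c0) := by
            rw [Finset.sum_mul]
            exact Finset.sum_congr rfl fun c _ => by
              rw [AddChar.map_add_eq_mul, hat0]
        _ = ∑ c : C, ψ (ip u ↑(c + a • (⟨c0, hc0⟩ : C))) := by
            exact Finset.sum_congr rfl fun c _ => by
              rw [show ((c + a • (⟨c0, hc0⟩ : C) : C) : Fin n → F) = ↑c + a • c0 from rfl,
                hiplin]
        _ = ∑ c : C, ψ (ip u ↑c) := Fintype.sum_equiv (Equiv.addRight (a • (⟨c0, hc0⟩ : C)))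
              _ _ (fun c => rfl)
    have : (∑ c : C, ψ (ip u ↑c)) * (ψ b - 1) = 0 := by
      rw [mul_sub, mul_one, key, sub_self]
    rcases mul_eq_zero.1 this with h | h
    · exact h
    · exact absurd (sub_eq_zero.1 h) hb
  have hdual_full : ∀ u ∈ dualCode C, ∑ c : C, ψ (ip u ↑c) = (Fintype.card C : ℂ) := by
    intro u hu
    have h1 : ∀ c : C, ψ (ip u ↑c) = 1 := fun c => by
      rw [show ip u ↑c = 0 from hu ↑c c.2, AddChar.map_zero_eq_one]
    simp [h1, Finset.card_univ]
  -- the 0/1 indicator of nonzero entries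
  set e : F → ℂ := fun a => if a = 0 then 0 else 1 with he_def
  have he : ∀ u : Fin n → F, (hammingNorm u : ℂ) = ∑ i, e (u i) := by
    intro u
    rw [hammingNorm, Finset.card_filter]
    push_cast
    exact Finset.sum_congr rfl fun i _ => by
      by_cases h : u i = 0 <;> simp [he_def, h]
  -- the annihilator polynomial of the dual weights
  set Psi : (Fin n → F) → ℂ := fun u => ∏ w ∈ W', ((hammingNorm u : ℂ) - (w : ℂ)) with hPsi
  have hPsi0 : Psi 0 ≠ 0 := by
    refine Finset.prod_ne_zero_iff.2 fun w hw => ?_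
    have h1 : (hammingNorm (0 : Fin n → F) : ℂ) = 0 := by simp
    rw [h1, zero_sub, neg_ne_zero, Nat.cast_ne_zero]
    exact (hW'mem w hw).1
  have hPsidual : ∀ u, u ∈ dualCode C → u ≠ 0 → Psi u = 0 := by
    intro u hu hu0
    exact Finset.prod_eq_zero (hW'mem' u hu hu0) (by simp)
  set G : (Fin n → F) → ℂ := fun y => ∑ u : Fin n → F, Psi u * ψ (ip u y) with hG
  -- Step 1 : the sum of G over the coset v + C is |C| * Psi 0 ≠ 0
  have hstep1 : ∑ c : C, G (v + ↑c) = (Fintype.card C : ℂ) * Psi 0 := by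
    calc ∑ c : C, G (v + ↑c)
        = ∑ u : Fin n → F, ∑ c : C, Psi u * ψ (ip u (v + ↑c)) := Finset.sum_comm
      _ = ∑ u : Fin n → F, Psi u * ψ (ip u v) * ∑ c : C, ψ (ip u ↑c) := by
          refine Finset.sum_congr rfl fun u _ => ?_
          rw [Finset.mul_sum]
          refine Finset.sum_congr rfl fun c _ => ?_
          have h2 : ip u (v + ↑c) = ip u v + ip u ↑c := by
            simp [hip, mul_add, Finset.sum_add_distrib]
          rw [h2, AddChar.map_add_eq_mul, mul_assoc]
      _ = ∑ u : Fin n → F,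
            (if u ∈ dualCode C then Psi u * ψ (ip u v) * (Fintype.card C : ℂ) else 0) := by
          refine Finset.sum_congr rfl fun u _ => ?_
          by_cases hu : u ∈ dualCode C
          · rw [if_pos hu, hdual_full u hu]
          · rw [if_neg hu, hdualsum u hu, mul_zero]
      _ = (Fintype.card C : ℂ) * Psi 0 := by
          rw [Finset.sum_eq_single (0 : Fin n → F)]
          · rw [if_pos (dualCode C).zero_mem]
            have h3 : ip 0 v = 0 := by simp [hip]
            rw [h3, AddChar.map_zero_eq_one, mul_one, mul_comm]
          · intro u _ hu0
            by_cases hu : u ∈ dualCode C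
            · rw [if_pos hu, hPsidual u hu hu0, zero_mul, zero_mul]
            · rw [if_neg hu]
          · intro h; exact absurd (Finset.mem_univ _) h
  -- Step 2 : G vanishes on vectors of weight > s'
  have hstep2 : ∀ y : Fin n → F, s' < hammingNorm y → G y = 0 := by
    intro y hy
    -- expand Psi into a sum over functions φ : W' → Option (Fin n)
    have hexp : ∀ u : Fin n → F, Psi u = ∑ φ : {x // x ∈ W'} → Option (Fin n),
        ∏ w : {x // x ∈ W'}, Option.elim (φ w) (-((w : ℕ) : ℂ)) (fun i => e (u i)) := by
      intro u
      have hfac : ∀ w : {x // x ∈ W'}, ((hammingNorm u : ℂ) - ((w : ℕ) : ℂ)) =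
          ∑ o : Option (Fin n), Option.elim o (-((w : ℕ) : ℂ)) (fun i => e (u i)) := by
        intro w
        rw [Fintype.sum_option]
        simp only [Option.elim]
        rw [he u]; ring
      calc Psi u = ∏ w : {x // x ∈ W'}, ((hammingNorm u : ℂ) - ((w : ℕ) : ℂ)) :=
            (Finset.prod_attach _ _).symm
        _ = ∏ w : {x // x ∈ W'}, ∑ o : Option (Fin n),
              Option.elim o (-((w : ℕ) : ℂ)) (fun i => e (u i)) :=
            Finset.prod_congr rfl fun w _ => hfac w
        _ = _ := Fintype.prod_sum _
    rw [hG]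
    simp only []
    calc ∑ u : Fin n → F, Psi u * ψ (ip u y)
        = ∑ u : Fin n → F, ∑ φ : {x // x ∈ W'} → Option (Fin n),
            (∏ w : {x // x ∈ W'}, Option.elim (φ w) (-((w : ℕ) : ℂ)) (fun i => e (u i)))
              * ψ (ip u y) := by
          exact Finset.sum_congr rfl fun u _ => by rw [hexp u, Finset.sum_mul]
      _ = ∑ φ : {x // x ∈ W'} → Option (Fin n), ∑ u : Fin n → F,
            (∏ w : {x // x ∈ W'}, Option.elim (φ w) (-((w : ℕ) : ℂ)) (fun i => e (u i)))
              * ψ (ip u y) := Finset.sum_comm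
      _ = 0 := by
          refine Finset.sum_eq_zero fun φ _ => ?_
          -- the set of coordinates hit by φ
          set J : Finset (Fin n) := Finset.univ.filter
            (fun i => ∃ w : {x // x ∈ W'}, φ w = some i) with hJ
          have hJcard : J.card ≤ s' := by
            have h1 : J.card ≤ (Finset.univ.image φ).card :=
              Finset.card_le_card_of_injOn some
                (fun i hi => by
                  rcases Finset.mem_filter.1 hi with ⟨-, w, hw⟩
                  exact Finset.mem_image.2 ⟨w, Finset.mem_univ _, hw⟩)
                (fun a _ b _ h => Option.some_injective _ h)
            have h2 : (Finset.univ.image φ).card ≤ Fintype.card {x // x ∈ W'} :=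
              Finset.card_image_le.trans (by simp)
            rw [Fintype.card_coe, hW'card] at h2
            exact h1.trans h2
          obtain ⟨i0, hy0, hi0⟩ : ∃ i0, y i0 ≠ 0 ∧ i0 ∉ J := by
            by_contra h
            push_neg at h
            have hsub : (Finset.univ.filter fun i => y i ≠ 0) ⊆ J := fun i hi =>
              h i (Finset.mem_filter.1 hi).2
            have := Finset.card_le_card hsub
            rw [show (Finset.univ.filter fun i => y i ≠ 0).card = hammingNorm y from rfl]
              at this
            omega
          -- the fiber counts
          set m : Fin n → ℕ := fun i => Fintype.card {w : {x // x ∈ W'} // φ w = some i}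
            with hm
          have hm0 : m i0 = 0 := by
            rw [hm]
            refine Fintype.card_eq_zero_iff.2 ⟨fun w => ?_⟩
            exact hi0 (Finset.mem_filter.2 ⟨Finset.mem_univ _, ⟨w.1, w.2⟩⟩)
          -- factor the summand coordinatewise
          have hfactor : ∀ u : Fin n → F,
              (∏ w : {x // x ∈ W'}, Option.elim (φ w) (-((w : ℕ) : ℂ)) (fun i => e (u i)))
                * ψ (ip u y)
              = (∏ w : {w : {x // x ∈ W'} // φ w = none}, (-(((w : {x // x ∈ W'}) : ℕ) : ℂ)))
                * ∏ i, (e (u i) ^ m i * ψ (u i * y i)) := by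
            intro u
            have h1 : (∏ w : {x // x ∈ W'}, Option.elim (φ w) (-((w : ℕ) : ℂ))
                (fun i => e (u i)))
                = ∏ o : Option (Fin n), ∏ w : {w : {x // x ∈ W'} // φ w = o},
                    Option.elim o (-((((w : {x // x ∈ W'})) : ℕ) : ℂ)) (fun i => e (u i)) := by
              rw [← Fintype.prod_fiberwise (fun w : {x // x ∈ W'} => φ w)
                (fun w => Option.elim (φ w) (-((w : ℕ) : ℂ)) (fun i => e (u i)))]
              exact Finset.prod_congr rfl fun o _ => Finset.prod_congr rfl fun w _ => by
                rw [w.2]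
            rw [h1, Fintype.prod_option]
            have h2 : ∀ i : Fin n, (∏ w : {w : {x // x ∈ W'} // φ w = some i},
                Option.elim (some i) (-((((w : {x // x ∈ W'})) : ℕ) : ℂ)) (fun j => e (u j)))
                = e (u i) ^ m i := by
              intro i
              by_cases h : u i = 0 <;>
                simp [Finset.prod_const, hm, Finset.card_univ, he_def, h]
            have h3 : ψ (ip u y) = ∏ i, ψ (u i * y i) := addChar_map_finsum ψ _ _
            rw [h3]
            simp only [Option.elim] at h2 ⊢
            rw [Finset.prod_congr rfl (fun i _ => h2 i)]
            rw [mul_assoc, ← Finset.prod_mul_distrib]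
          calc ∑ u : Fin n → F,
                (∏ w : {x // x ∈ W'}, Option.elim (φ w) (-((w : ℕ) : ℂ)) (fun i => e (u i)))
                  * ψ (ip u y)
              = ∑ u : Fin n → F,
                  (∏ w : {w : {x // x ∈ W'} // φ w = none},
                    (-(((w : {x // x ∈ W'}) : ℕ) : ℂ)))
                  * ∏ i, (e (u i) ^ m i * ψ (u i * y i)) :=
                Finset.sum_congr rfl fun u _ => hfactor u
            _ = (∏ w : {w : {x // x ∈ W'} // φ w = none},
                  (-(((w : {x // x ∈ W'}) : ℕ) : ℂ)))
                  * ∑ u : Fin n → F, ∏ i, (e (u i) ^ m i * ψ (u i * y i)) := by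
                rw [Finset.mul_sum]
            _ = 0 := by
                have h4 : ∑ u : Fin n → F, ∏ i, (e (u i) ^ m i * ψ (u i * y i))
                    = ∏ i, ∑ a : F, (e a ^ m i * ψ (a * y i)) :=
                    (Fintype.prod_sum (κ := fun _ : Fin n => F)
                      (fun i a => e a ^ m i * ψ (a * y i))).symm
                rw [h4]
                have h5 : ∑ a : F, (e a ^ m i0 * ψ (a * y i0)) = 0 := by
                  rw [hm0]
                  simp only [pow_zero, one_mul]
                  exact hsum_mul _ hy0
                rw [Finset.prod_eq_zero (Finset.mem_univ i0) h5, mul_zero]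
  -- conclusion
  have hne : ∃ c : C, G (v + ↑c) ≠ 0 := by
    by_contra h
    push_neg at h
    have h0 : ∑ c : C, G (v + ↑c) = 0 := Finset.sum_eq_zero fun c _ => h c
    rw [hstep1] at h0
    rcases mul_eq_zero.1 h0 with h1 | h2
    · exact Nat.cast_ne_zero.2 Fintype.card_ne_zero h1
    · exact hPsi0 h2
  obtain ⟨c, hc⟩ := hne
  have hle : hammingNorm (v + (↑c : Fin n → F)) ≤ s' := by
    by_contra h
    push_neg at h
    exact hc (hstep2 _ h)
  refine ⟨-(↑c : Fin n → F), neg_mem c.2, ?_⟩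
  rw [hammingDist_eq_hammingNorm]
  rw [← neg_add]; simp only [hammingNorm, Pi.neg_apply, neg_ne_zero]; exact hle

/-- Delsarte's external distance bound: if the dual code of a linear code `C` over `GF(q)`
has exactly `s'` distinct nonzero weights, then the covering radius of `C` is at most `s'`. -/
theorem stmt_3 (F : Type*) [Field F] [Fintype F] [DecidableEq F] (n : ℕ)
    (C : Submodule F (Fin n → F)) (s' : ℕ)
    (hs : {w : ℕ | w ≠ 0 ∧ ∃ c ∈ dualCode C, hammingNorm c = w}.ncard = s') :
    coveringRadius C ≤ s' := by
  classical
  refine csSup_le ⟨sInf {d | ∃ c ∈ C, hammingDist 0 c = d}, 0, rfl⟩ ?_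
  rintro r ⟨v, rfl⟩
  obtain ⟨c, hc, hd⟩ := delsarte_key C s' hs v
  exact le_trans (Nat.sInf_le ⟨c, hc, rfl⟩) hd
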